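/- Let (Ω,μ) be a finite measure space, let ρ be a measurable function with 0 < c ≤ ρ ≤ C almost everywhere for constants c, C, and let {w_k}_{k≥0} ⊂ L²(Ω;ℝ^N) be a sequence such that (i) |∫_Ω (1/ρ)(w_k − w_{k−1})·w_m dμ| < 2^{−k} for every k ≥ 1 and every 0 ≤ m ≤ k−1, and (ii) the sequence of numbers ∫_Ω (1/ρ)|w_k|² dμ converges as k → ∞. Then {w_k} is a Cauchy sequence in L²(Ω;ℝ^N) and hence converges strongly in L²(Ω;ℝ^N). -/

import Mathlib

open MeasureTheory Filter Topology

section AuxStatement15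

variable {α : Type*} [MeasurableSpace α] {μ : Measure α}

lemma statement_15_aux_integrable_mul {u v : α → ℝ} (hu : MemLp u 2 μ) (hv : MemLp v 2 μ) :
    Integrable (fun x => u x * v x) μ := by
  have h1 := (hu.add hv).integrable_sq
  have h2 := hu.integrable_sq
  have h3 := hv.integrable_sq
  have heq : (fun x => u x * v x)
      = fun x => (2⁻¹ : ℝ) * (((u + v) x) ^ 2 - (u x) ^ 2 - (v x) ^ 2) := by
    funext x; simp only [Pi.add_apply]; ring
  rw [heq]
  exact ((h1.sub h2).sub h3).const_mul _

lemma statement_15_aux_norm_Lp (f : Lp ℝ 2 μ) : ‖f‖ ^ 2 = ∫ x, (f x) ^ 2 ∂μ := by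
  rw [← real_inner_self_eq_norm_sq, L2.inner_def]
  refine integral_congr_ae (ae_of_all _ fun x => ?_)
  simp [RCLike.inner_apply, sq]

lemma statement_15_aux_norm_toLp (u : α → ℝ) (hu : MemLp u 2 μ) :
    ‖hu.toLp u‖ ^ 2 = ∫ x, (u x) ^ 2 ∂μ := by
  rw [statement_15_aux_norm_Lp]
  refine integral_congr_ae ?_
  filter_upwards [hu.coeFn_toLp] with x hx
  rw [hx]

end AuxStatement15

/-- If `{w_k} ⊂ L²(Ω;ℝ^N)` on a finite measure space, `ρ` is bounded above and below
by positive constants, the cross terms `∫ (1/ρ)(w_k − w_{k−1})·w_m dμ` are smaller than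
`2^{−k}` for `m < k`, and the weighted norms `∫ (1/ρ)|w_k|² dμ` converge, then `{w_k}`
is Cauchy in `L²(Ω;ℝ^N)` and converges strongly in `L²(Ω;ℝ^N)`. -/
theorem statement_15 {Ω : Type*} [MeasurableSpace Ω] (μ : Measure Ω) [IsFiniteMeasure μ]
    {N : ℕ} (ρ : Ω → ℝ) (hρ_meas : Measurable ρ) (c C : ℝ) (hc : 0 < c)
    (hρ : ∀ᵐ x ∂μ, c ≤ ρ x ∧ ρ x ≤ C)
    (w : ℕ → Ω → Fin N → ℝ) (hw : ∀ k, MemLp (w k) 2 μ)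
    (hcross : ∀ k : ℕ, 1 ≤ k → ∀ m : ℕ, m ≤ k - 1 →
      |∫ x, (ρ x)⁻¹ * ∑ i, (w k x i - w (k - 1) x i) * w m x i ∂μ| < (2 : ℝ)⁻¹ ^ k)
    (hconv : ∃ L : ℝ, Tendsto (fun k => ∫ x, (ρ x)⁻¹ * ∑ i, (w k x i) ^ 2 ∂μ)
      atTop (𝓝 L)) :
    (∀ ε > 0, ∃ K : ℕ, ∀ m ≥ K, ∀ n ≥ K,
      ∫ x, ∑ i, (w n x i - w m x i) ^ 2 ∂μ < ε) ∧
    ∃ wlim : Ω → Fin N → ℝ, MemLp wlim 2 μ ∧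
      Tendsto (fun k => ∫ x, ∑ i, (w k x i - wlim x i) ^ 2 ∂μ) atTop (𝓝 0) := by
  classical
  by_cases hμ0 : μ = 0
  · subst hμ0
    refine ⟨fun ε hε => ⟨0, fun m _ n _ => by simpa using hε⟩,
      fun _ _ => 0, ?_, ?_⟩
    · exact memLp_const (0 : Fin N → ℝ)
    · simpa using (tendsto_const_nhds : Tendsto (fun _ : ℕ => (0 : ℝ)) atTop (𝓝 0))
  -- main case
  have hCpos : 0 < C := by
    haveI : (ae μ).NeBot := ae_neBot.2 hμ0
    obtain ⟨x, hx⟩ := hρ.exists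
    linarith [hx.1, hx.2]
  have hw' : ∀ k (i : Fin N), MemLp (fun x => w k x i) 2 μ := by
    intro k i
    refine MemLp.of_le (hw k) ?_ (ae_of_all _ fun x => ?_)
    · exact (continuous_apply i).comp_aestronglyMeasurable (hw k).1
    · exact norm_le_pi_norm (w k x) i
  have hd : ∀ n m (i : Fin N), MemLp (fun x => w n x i - w m x i) 2 μ :=
    fun n m i => (hw' n i).sub (hw' m i)
  have hρinv_meas : AEStronglyMeasurable (fun x => (ρ x)⁻¹) μ :=
    hρ_meas.inv.aestronglyMeasurable
  have hρinv_bd : ∀ᵐ x ∂μ, ‖(ρ x)⁻¹‖ ≤ c⁻¹ := by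
    filter_upwards [hρ] with x hx
    rw [Real.norm_eq_abs, abs_of_nonneg (inv_nonneg.2 (le_of_lt (lt_of_lt_of_le hc hx.1)))]
    exact inv_anti₀ hc hx.1
  have hIntW : ∀ S : Ω → ℝ, Integrable S μ → Integrable (fun x => (ρ x)⁻¹ * S x) μ :=
    fun S hS => hS.bdd_mul hρinv_meas hρinv_bd
  have hScross : ∀ n m r, Integrable (fun x => ∑ i, (w n x i - w m x i) * w r x i) μ :=
    fun n m r => integrable_finset_sum _ fun i _ =>
      statement_15_aux_integrable_mul (hd n m i) (hw' r i)
  have hSsq : ∀ n, Integrable (fun x => ∑ i, (w n x i) ^ 2) μ :=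
    fun n => integrable_finset_sum _ fun i _ => (hw' n i).integrable_sq
  have hSdd : ∀ n m, Integrable (fun x => ∑ i, (w n x i - w m x i) ^ 2) μ :=
    fun n m => integrable_finset_sum _ fun i _ => (hd n m i).integrable_sq
  -- telescoping bound on the cross term
  have key : ∀ m n, m ≤ n →
      |∫ x, (ρ x)⁻¹ * ∑ i, (w n x i - w m x i) * w m x i ∂μ|
        ≤ (2 : ℝ)⁻¹ ^ m - (2 : ℝ)⁻¹ ^ n := by
    intro m n hmn
    induction n, hmn using Nat.le_induction with
    | base => simp
    | succ n hn ih =>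
      have hsplit : (∫ x, (ρ x)⁻¹ * ∑ i, (w (n + 1) x i - w m x i) * w m x i ∂μ)
          = (∫ x, (ρ x)⁻¹ * ∑ i, (w n x i - w m x i) * w m x i ∂μ)
            + ∫ x, (ρ x)⁻¹ * ∑ i, (w (n + 1) x i - w n x i) * w m x i ∂μ := by
        rw [← integral_add (hIntW _ (hScross n m m)) (hIntW _ (hScross (n + 1) n m))]
        refine integral_congr_ae (ae_of_all _ fun x => ?_)
        show (ρ x)⁻¹ * ∑ i, (w (n + 1) x i - w m x i) * w m x i
            = (ρ x)⁻¹ * ∑ i, (w n x i - w m x i) * w m x i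
              + (ρ x)⁻¹ * ∑ i, (w (n + 1) x i - w n x i) * w m x i
        rw [← mul_add, ← Finset.sum_add_distrib]
        congr 1
        exact Finset.sum_congr rfl fun i _ => by ring
      have hc2 := hcross (n + 1) (by omega) m (by omega)
      rw [Nat.add_sub_cancel] at hc2
      rw [hsplit]
      calc |(∫ x, (ρ x)⁻¹ * ∑ i, (w n x i - w m x i) * w m x i ∂μ)
              + ∫ x, (ρ x)⁻¹ * ∑ i, (w (n + 1) x i - w n x i) * w m x i ∂μ|
          ≤ |∫ x, (ρ x)⁻¹ * ∑ i, (w n x i - w m x i) * w m x i ∂μ|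
              + |∫ x, (ρ x)⁻¹ * ∑ i, (w (n + 1) x i - w n x i) * w m x i ∂μ| := abs_add_le _ _
        _ ≤ ((2 : ℝ)⁻¹ ^ m - (2 : ℝ)⁻¹ ^ n) + (2 : ℝ)⁻¹ ^ (n + 1) := by
            exact add_le_add ih hc2.le
        _ = (2 : ℝ)⁻¹ ^ m - (2 : ℝ)⁻¹ ^ (n + 1) := by ring
  -- expansion of the weighted squared difference
  have hexp : ∀ n m,
      (∫ x, (ρ x)⁻¹ * ∑ i, (w n x i - w m x i) ^ 2 ∂μ)
      = (∫ x, (ρ x)⁻¹ * ∑ i, (w n x i) ^ 2 ∂μ)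
        - (∫ x, (ρ x)⁻¹ * ∑ i, (w m x i) ^ 2 ∂μ)
        - 2 * ∫ x, (ρ x)⁻¹ * ∑ i, (w n x i - w m x i) * w m x i ∂μ := by
    intro n m
    have h1 := hIntW _ (hSsq n)
    have h2 := hIntW _ (hSsq m)
    have h3 := hIntW _ (hScross n m m)
    have hsplit : (∫ x, ((ρ x)⁻¹ * ∑ i, (w n x i) ^ 2
          - (ρ x)⁻¹ * ∑ i, (w m x i) ^ 2
          - 2 * ((ρ x)⁻¹ * ∑ i, (w n x i - w m x i) * w m x i)) ∂μ)
        = (∫ x, (ρ x)⁻¹ * ∑ i, (w n x i) ^ 2 ∂μ)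
          - (∫ x, (ρ x)⁻¹ * ∑ i, (w m x i) ^ 2 ∂μ)
          - 2 * ∫ x, (ρ x)⁻¹ * ∑ i, (w n x i - w m x i) * w m x i ∂μ := by
      have h12 : Integrable (fun x => (ρ x)⁻¹ * ∑ i, (w n x i) ^ 2
          - (ρ x)⁻¹ * ∑ i, (w m x i) ^ 2) μ := h1.sub h2
      have h32 : Integrable (fun x =>
          2 * ((ρ x)⁻¹ * ∑ i, (w n x i - w m x i) * w m x i)) μ := h3.const_mul 2
      rw [integral_sub h12 h32, integral_sub h1 h2, integral_const_mul]
    rw [← hsplit]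
    refine integral_congr_ae (ae_of_all _ fun x => ?_)
    show (ρ x)⁻¹ * ∑ i, (w n x i - w m x i) ^ 2
        = (ρ x)⁻¹ * ∑ i, (w n x i) ^ 2 - (ρ x)⁻¹ * ∑ i, (w m x i) ^ 2
          - 2 * ((ρ x)⁻¹ * ∑ i, (w n x i - w m x i) * w m x i)
    have hsum : ∑ i, (w n x i - w m x i) ^ 2
        = (∑ i, (w n x i) ^ 2) - (∑ i, (w m x i) ^ 2)
          - 2 * ∑ i, (w n x i - w m x i) * w m x i := by
      rw [Finset.mul_sum, ← Finset.sum_sub_distrib, ← Finset.sum_sub_distrib]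
      exact Finset.sum_congr rfl fun i _ => by ring
    rw [hsum]; ring
  -- comparison with the unweighted integral
  have hcomp : ∀ n m, (∫ x, ∑ i, (w n x i - w m x i) ^ 2 ∂μ)
      ≤ C * ∫ x, (ρ x)⁻¹ * ∑ i, (w n x i - w m x i) ^ 2 ∂μ := by
    intro n m
    rw [← integral_const_mul]
    refine integral_mono_ae (hSdd n m) ((hIntW _ (hSdd n m)).const_mul C) ?_
    filter_upwards [hρ] with x hx
    have hS : (0 : ℝ) ≤ ∑ i, (w n x i - w m x i) ^ 2 :=
      Finset.sum_nonneg fun i _ => sq_nonneg _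
    have hρx : 0 < ρ x := lt_of_lt_of_le hc hx.1
    calc (∑ i, (w n x i - w m x i) ^ 2)
        = ρ x * ((ρ x)⁻¹ * ∑ i, (w n x i - w m x i) ^ 2) := by
          rw [← mul_assoc, mul_inv_cancel₀ hρx.ne', one_mul]
      _ ≤ C * ((ρ x)⁻¹ * ∑ i, (w n x i - w m x i) ^ 2) :=
          mul_le_mul_of_nonneg_right hx.2 (mul_nonneg (inv_nonneg.2 hρx.le) hS)
  obtain ⟨L, hL⟩ := hconv
  -- Part 1: Cauchy
  have hcau : ∀ ε > 0, ∃ K : ℕ, ∀ m ≥ K, ∀ n ≥ K,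
      ∫ x, ∑ i, (w n x i - w m x i) ^ 2 ∂μ < ε := by
    intro ε hε
    have h8 : 0 < ε / (8 * C) := by positivity
    obtain ⟨K1, hK1⟩ := (Metric.tendsto_atTop.1 hL) (ε / (8 * C)) h8
    obtain ⟨K2, hK2⟩ := exists_pow_lt_of_lt_one h8 (by norm_num : (2 : ℝ)⁻¹ < 1)
    refine ⟨max K1 K2, fun m hm n hn => ?_⟩
    have main : ∀ p q : ℕ, max K1 K2 ≤ p → max K1 K2 ≤ q → p ≤ q →
        ∫ x, ∑ i, (w q x i - w p x i) ^ 2 ∂μ < ε := by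
      intro p q hp hq hpq
      have hF : |∫ x, (ρ x)⁻¹ * ∑ i, (w q x i - w p x i) * w p x i ∂μ| ≤ (2 : ℝ)⁻¹ ^ p :=
        (key p q hpq).trans (by
          have : (0 : ℝ) ≤ (2 : ℝ)⁻¹ ^ q := by positivity
          linarith)
      have hpow : (2 : ℝ)⁻¹ ^ p < ε / (8 * C) := by
        refine lt_of_le_of_lt ?_ hK2
        exact pow_le_pow_of_le_one (by norm_num) (by norm_num) (le_trans (le_max_right _ _) hp)
      have h1 : |(∫ x, (ρ x)⁻¹ * ∑ i, (w q x i) ^ 2 ∂μ) - L| < ε / (8 * C) := by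
        have := hK1 q (le_trans (le_max_left _ _) hq)
        rwa [Real.dist_eq] at this
      have h2 : |(∫ x, (ρ x)⁻¹ * ∑ i, (w p x i) ^ 2 ∂μ) - L| < ε / (8 * C) := by
        have := hK1 p (le_trans (le_max_left _ _) hp)
        rwa [Real.dist_eq] at this
      have hdb : (∫ x, (ρ x)⁻¹ * ∑ i, (w q x i - w p x i) ^ 2 ∂μ) < 4 * (ε / (8 * C)) := by
        rw [hexp q p]
        have e1 := le_abs_self ((∫ x, (ρ x)⁻¹ * ∑ i, (w q x i) ^ 2 ∂μ) - L)
        have e2 := neg_abs_le ((∫ x, (ρ x)⁻¹ * ∑ i, (w p x i) ^ 2 ∂μ) - L)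
        have e3 := neg_abs_le (∫ x, (ρ x)⁻¹ * ∑ i, (w q x i - w p x i) * w p x i ∂μ)
        linarith
      calc (∫ x, ∑ i, (w q x i - w p x i) ^ 2 ∂μ)
          ≤ C * ∫ x, (ρ x)⁻¹ * ∑ i, (w q x i - w p x i) ^ 2 ∂μ := hcomp q p
        _ ≤ C * (4 * (ε / (8 * C))) := by
            refine mul_le_mul_of_nonneg_left hdb.le hCpos.le
        _ = ε / 2 := by field_simp; ring
        _ < ε := by linarith
    rcases le_total m n with h | h
    · exact main m n hm hn h
    · have heq : (∫ x, ∑ i, (w n x i - w m x i) ^ 2 ∂μ)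
          = ∫ x, ∑ i, (w m x i - w n x i) ^ 2 ∂μ := by
        refine integral_congr_ae (ae_of_all _ fun x => ?_)
        exact Finset.sum_congr rfl fun i _ => by ring
      rw [heq]
      exact main n m hn hm h
  refine ⟨hcau, ?_⟩
  -- Part 2: strong convergence
  set f : ℕ → Fin N → Lp ℝ 2 μ := fun k i => (hw' k i).toLp _ with hf
  have hdist : ∀ k l (i : Fin N),
      ‖f k i - f l i‖ ^ 2 = ∫ x, (w k x i - w l x i) ^ 2 ∂μ := by
    intro k l i
    rw [hf]
    rw [← MemLp.toLp_sub]
    exact statement_15_aux_norm_toLp _ ((hw' k i).sub (hw' l i))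
  have hcomp_le : ∀ k l (i : Fin N),
      (∫ x, (w k x i - w l x i) ^ 2 ∂μ) ≤ ∫ x, ∑ j, (w k x j - w l x j) ^ 2 ∂μ := by
    intro k l i
    refine integral_mono ((hd k l i).integrable_sq) (hSdd k l) fun x => ?_
    exact Finset.single_le_sum (f := fun j => (w k x j - w l x j) ^ 2)
      (fun j _ => sq_nonneg _) (Finset.mem_univ i)
  have hcs : ∀ i : Fin N, CauchySeq fun k => f k i := by
    intro i
    rw [Metric.cauchySeq_iff]
    intro ε hε
    obtain ⟨K, hK⟩ := hcau (ε ^ 2) (by positivity)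
    refine ⟨K, fun k hk l hl => ?_⟩
    have h2 : dist (f k i) (f l i) ^ 2 < ε ^ 2 := by
      rw [dist_eq_norm, hdist k l i]
      exact lt_of_le_of_lt (hcomp_le k l i) (hK l hl k hk)
    exact lt_of_pow_lt_pow_left₀ 2 hε.le h2
  have hlim : ∀ i : Fin N, ∃ g : Lp ℝ 2 μ, Tendsto (fun k => f k i) atTop (𝓝 g) :=
    fun i => cauchySeq_tendsto_of_complete (hcs i)
  choose g hg using hlim
  have hwlim : MemLp (fun x (i : Fin N) => g i x) 2 μ := by
    have hmeas : AEStronglyMeasurable (fun x (i : Fin N) => g i x) μ := by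
      have hae : ∀ i : Fin N, AEMeasurable (fun x => (g i : Ω → ℝ) x) μ :=
        fun i => (Lp.aestronglyMeasurable (g i)).aemeasurable
      choose G hGm hGe using hae
      refine ⟨fun x i => G i x, (measurable_pi_lambda _ hGm).stronglyMeasurable, ?_⟩
      filter_upwards [ae_all_iff.2 hGe] with x hx
      funext i
      exact hx i
    have hdom : MemLp (fun x => ∑ i : Fin N, ‖g i x‖) 2 μ :=
      memLp_finset_sum _ fun i _ => (Lp.memLp (g i)).norm
    refine MemLp.of_le hdom hmeas (ae_of_all _ fun x => ?_)
    have hnn : (0 : ℝ) ≤ ∑ i : Fin N, ‖g i x‖ :=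
      Finset.sum_nonneg fun i _ => norm_nonneg _
    calc ‖fun i => g i x‖ ≤ ∑ i : Fin N, ‖g i x‖ := by
          refine (pi_norm_le_iff_of_nonneg hnn).2 fun i => ?_
          exact Finset.single_le_sum (f := fun j => ‖g j x‖)
            (fun j _ => norm_nonneg _) (Finset.mem_univ i)
      _ ≤ ‖∑ i : Fin N, ‖g i x‖‖ := le_abs_self _
  refine ⟨fun x i => g i x, hwlim, ?_⟩
  have hteneq : ∀ k, (∫ x, ∑ i, (w k x i - g i x) ^ 2 ∂μ) = ∑ i : Fin N, ‖f k i - g i‖ ^ 2 := by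
    intro k
    have hint2 : ∀ i : Fin N, Integrable (fun x => (w k x i - g i x) ^ 2) μ := fun i =>
      MemLp.integrable_sq
        (show MemLp (fun x => w k x i - g i x) 2 μ from (hw' k i).sub (Lp.memLp (g i)))
    rw [integral_finset_sum _ fun i _ => hint2 i]
    refine Finset.sum_congr rfl fun i _ => ?_
    have hae : (fun x => (w k x i - g i x) ^ 2) =ᵐ[μ] fun x => ((f k i - g i : Lp ℝ 2 μ) x) ^ 2 := by
      filter_upwards [Lp.coeFn_sub (f k i) (g i), (hw' k i).coeFn_toLp] with x h1 h2
      rw [h1, Pi.sub_apply]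
      have : (f k i : Ω → ℝ) x = w k x i := h2
      rw [this]
    rw [integral_congr_ae hae, ← statement_15_aux_norm_Lp]
  have htend : Tendsto (fun k => ∑ i : Fin N, ‖f k i - g i‖ ^ 2) atTop (𝓝 0) := by
    have hi : ∀ i : Fin N, Tendsto (fun k => ‖f k i - g i‖ ^ 2) atTop (𝓝 0) := by
      intro i
      have h1 := (hg i).sub (tendsto_const_nhds :
        Tendsto (fun _ : ℕ => g i) atTop (𝓝 (g i)))
      rw [sub_self] at h1
      have h2 := h1.norm
      rw [norm_zero] at h2
      have h3 := h2.pow 2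
      norm_num at h3
      exact h3
    simpa using tendsto_finset_sum Finset.univ fun i _ => hi i
  show Tendsto (fun k => ∫ x, ∑ i, (w k x i - g i x) ^ 2 ∂μ) atTop (𝓝 0)
  rw [funext hteneq]
  exact htend
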